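/- Fix p ∈ (0,1) and let A be a Bernoulli(p) random subset of ℕ. Then with probability 1 the following holds: for every M > 0 and every integer L ≥ 1, there exist natural numbers x_1 < ⋯ < x_L such that FS(x_1,…,x_L) ⊆ A and every element of FS(x_1,…,x_L) is greater than M. -/

import Mathlib

open MeasureTheory ProbabilityTheory Filter

/-- The finite sumset of `x : Fin L → ℕ`: all sums over nonempty subsets of indices. -/
def FS {L : ℕ} (x : Fin L → ℕ) : Set ℕ :=
  {s | ∃ F : Finset (Fin L), F.Nonempty ∧ s = ∑ i ∈ F, x i}

lemma sum_range_two_pow (L : ℕ) : ∑ j ∈ Finset.range L, 2 ^ j = 2 ^ L - 1 := by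
  induction L with
  | zero => simp
  | succ n ih =>
    rw [Finset.sum_range_succ, ih, pow_succ]
    have : 1 ≤ 2 ^ n := Nat.one_le_two_pow
    omega

lemma aux_perL {Ω : Type*} [MeasurableSpace Ω]
    (μ : Measure Ω) [IsProbabilityMeasure μ]
    (p : ℝ) (hp : p ∈ Set.Ioo (0 : ℝ) 1)
    (ε : ℕ → Ω → Bool) (hmeas : ∀ n, Measurable (ε n))
    (hindep : iIndepFun ε μ)
    (hbern : ∀ n, μ {ω | ε n ω = true} = ENNReal.ofReal p)
    (L : ℕ) (hL : 1 ≤ L) :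
    ∀ᵐ ω ∂μ, ∀ M : ℕ,
      ∃ x : Fin L → ℕ, StrictMono x ∧ FS x ⊆ {n | ε n ω = true} ∧
        ∀ s ∈ FS x, M < s := by
  set q : ENNReal := ENNReal.ofReal p with hq
  set s : ℕ → Set Ω := fun n => {ω | ε n ω = true} with hsdef
  have hsm : ∀ n, MeasurableSet (s n) := by
    intro n
    have : s n = ε n ⁻¹' {true} := by ext ω; simp [hsdef]
    rw [this]
    exact hmeas n (measurableSet_singleton true)
  have hprod : ∀ T : Finset ℕ, μ (⋂ n ∈ T, s n) = q ^ T.card := by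
    intro T
    have := hindep.meas_biInter (S := T) (s := fun n => s n)
      (fun n _ => ⟨{true}, trivial, by ext ω; simp [hsdef]⟩)
    rw [this]
    simp only [show ∀ n, μ (s n) = q from hbern]
    rw [Finset.prod_const]
  set N : ℕ := 2 ^ L with hN
  have hN2 : 2 ≤ N := by
    have : 2 ^ 1 ≤ 2 ^ L := Nat.pow_le_pow_right (by norm_num) hL
    simpa using this
  set c : ℕ := 2 ^ L - 1 with hc
  have hc1 : 1 ≤ c := by omega
  set E : ℕ → Set Ω := fun k => ⋂ m ∈ Finset.Icc 1 c, s (N ^ k * m) with hE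
  have hEm : ∀ k, MeasurableSet (E k) :=
    fun k => Finset.measurableSet_biInter _ (fun m _ => hsm _)
  have hdisj : ∀ k j m m', k < j → m ∈ Finset.Icc 1 c → m' ∈ Finset.Icc 1 c →
      N ^ k * m ≠ N ^ j * m' := by
    intro k j m m' hkj hm hm' heq
    simp only [Finset.mem_Icc] at hm hm'
    have h1 : N ^ k * m ≤ N ^ k * c := Nat.mul_le_mul_left _ hm.2
    have hcN : c < N := by omega
    have h2 : N ^ k * c < N ^ (k + 1) := by
      rw [pow_succ]
      exact (Nat.mul_lt_mul_left (Nat.pow_pos (by omega))).mpr hcN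
    have h3 : N ^ (k + 1) ≤ N ^ j := Nat.pow_le_pow_right (by omega) hkj
    have h4 : N ^ j ≤ N ^ j * m' := Nat.le_mul_of_pos_right _ (by omega)
    omega
  have hinj : ∀ k : ℕ, ∀ m ∈ Finset.Icc 1 c, ∀ m' ∈ Finset.Icc 1 c,
      N ^ k * m = N ^ k * m' → m = m' := by
    intro k m _ m' _ h
    exact Nat.eq_of_mul_eq_mul_left (Nat.pow_pos (by omega)) h
  set B : ℕ → Finset ℕ := fun k => (Finset.Icc 1 c).image (fun m => N ^ k * m) with hB
  have hBcard : ∀ k, (B k).card = c := by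
    intro k
    rw [hB]
    rw [Finset.card_image_of_injOn (fun m hm m' hm' => hinj k m hm m' hm')]
    simp
  have hEeq : ∀ k, E k = ⋂ n ∈ B k, s n := by
    intro k
    ext ω
    simp only [hE, hB, Set.mem_iInter, Finset.mem_image]
    constructor
    · rintro h n ⟨m, hm, rfl⟩; exact h m hm
    · intro h m hm; exact h _ ⟨m, hm, rfl⟩
  have hμE : ∀ k, μ (E k) = q ^ c := by
    intro k; rw [hEeq, hprod, hBcard]
  have hEindep : iIndepSet E μ := by
    rw [iIndepSet_iff_meas_biInter hEm]
    intro F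
    have hU : (⋂ k ∈ F, E k) = ⋂ n ∈ F.biUnion B, s n := by
      ext ω
      simp only [Set.mem_iInter, Finset.mem_biUnion]
      constructor
      · rintro h n ⟨k, hk, hn⟩
        have := h k hk
        rw [hEeq] at this
        simp only [Set.mem_iInter] at this
        exact this n hn
      · intro h k hk
        rw [hEeq]
        simp only [Set.mem_iInter]
        exact fun n hn => h n ⟨k, hk, hn⟩
    have hBdisj : ∀ k ∈ (F : Set ℕ), ∀ j ∈ (F : Set ℕ), k ≠ j → Disjoint (B k) (B j) := by
      intro k _ j _ hkj
      rw [Finset.disjoint_left]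
      rintro n hn hn'
      simp only [hB, Finset.mem_image] at hn hn'
      obtain ⟨m, hm, rfl⟩ := hn
      obtain ⟨m', hm', heq⟩ := hn'
      rcases Nat.lt_or_ge k j with h | h
      · exact hdisj k j m m' h hm hm' heq.symm
      · have hjk : j < k := by omega
        exact hdisj j k m' m hjk hm' hm heq
    have hcard : (F.biUnion B).card = F.card * c := by
      rw [Finset.card_biUnion hBdisj]
      simp [hBcard, Finset.sum_const, Nat.mul_comm]
    rw [hU, hprod, hcard]
    have : ∀ k ∈ F, μ (E k) = q ^ c := fun k _ => hμE k
    rw [Finset.prod_congr rfl this, Finset.prod_const, ← pow_mul, Nat.mul_comm]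
  have hqpos : q ≠ 0 := by
    simp [hq, ENNReal.ofReal_eq_zero, not_le, hp.1]
  have htsum : (∑' k, μ (E k)) = (⊤ : ENNReal) := by
    simp only [hμE]
    exact ENNReal.tsum_const_eq_top_of_ne_zero (pow_ne_zero _ hqpos)
  have hone : μ (limsup E atTop) = 1 := measure_limsup_eq_one hEm hEindep htsum
  have hae : ∀ᵐ ω ∂μ, ω ∈ limsup E atTop := by
    have hc0 : μ (limsup E atTop)ᶜ = 0 := by
      rw [measure_compl (MeasurableSet.measurableSet_limsup hEm) (measure_ne_top μ _), hone]
      simp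
    exact mem_ae_iff.mpr hc0
  filter_upwards [hae] with ω hω M
  rw [Filter.mem_limsup_iff_frequently_mem] at hω
  rw [Filter.frequently_atTop] at hω
  obtain ⟨k, hkM, hkE⟩ := hω M
  have hNkM : M < N ^ k := lt_of_le_of_lt hkM (Nat.lt_pow_self (by omega))
  have hFS : ∀ n ∈ FS (fun i : Fin L => N ^ k * 2 ^ (i : ℕ)),
      ∃ t, 1 ≤ t ∧ t ≤ c ∧ n = N ^ k * t := by
    rintro n ⟨F, hFne, rfl⟩
    refine ⟨∑ i ∈ F, 2 ^ (i : ℕ), ?_, ?_, by rw [Finset.mul_sum]⟩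
    · obtain ⟨i, hi⟩ := hFne
      calc 1 ≤ 2 ^ (i : ℕ) := Nat.one_le_two_pow
      _ ≤ _ := Finset.single_le_sum (f := fun i : Fin L => 2 ^ (i : ℕ))
        (fun j _ => Nat.zero_le _) hi
    · have h1 : ∑ i ∈ F, 2 ^ (i : ℕ) ≤ ∑ i : Fin L, 2 ^ (i : ℕ) :=
        Finset.sum_le_sum_of_subset (Finset.subset_univ F)
      have h2 : ∑ i : Fin L, 2 ^ (i : ℕ) = ∑ j ∈ Finset.range L, 2 ^ j :=
        Fin.sum_univ_eq_sum_range _ _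
      rw [h2, sum_range_two_pow] at h1
      omega
  refine ⟨fun i => N ^ k * 2 ^ (i : ℕ), ?_, ?_, ?_⟩
  · intro i j hij
    exact (Nat.mul_lt_mul_left (Nat.pow_pos (by omega))).mpr
      (Nat.pow_lt_pow_right (by norm_num) hij)
  · intro n hn
    obtain ⟨t, ht1, htc, rfl⟩ := hFS n hn
    have := hkE
    simp only [hE, Set.mem_iInter] at this
    exact this t (Finset.mem_Icc.mpr ⟨ht1, htc⟩)
  · intro n hn
    obtain ⟨t, ht1, htc, rfl⟩ := hFS n hn
    calc M < N ^ k := hNkM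
    _ ≤ N ^ k * t := Nat.le_mul_of_pos_right _ (by omega)

/-- For a Bernoulli(`p`) random subset `A(ω) = {n | ε n ω = true}` of `ℕ`, almost surely,
for every bound `M` and every `L ≥ 1` there are `x₁ < ⋯ < x_L` with
`FS(x₁,…,x_L) ⊆ A(ω)` and all elements of `FS(x₁,…,x_L)` greater than `M`. -/
theorem FS_with_large_elements {Ω : Type*} [MeasurableSpace Ω]
    (μ : Measure Ω) [IsProbabilityMeasure μ]
    (p : ℝ) (hp : p ∈ Set.Ioo (0 : ℝ) 1)
    (ε : ℕ → Ω → Bool) (hmeas : ∀ n, Measurable (ε n))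
    (hindep : iIndepFun ε μ)
    (hbern : ∀ n, μ {ω | ε n ω = true} = ENNReal.ofReal p) :
    ∀ᵐ ω ∂μ, ∀ M : ℕ, 0 < M → ∀ L : ℕ, 1 ≤ L →
      ∃ x : Fin L → ℕ, StrictMono x ∧ FS x ⊆ {n | ε n ω = true} ∧
        ∀ s ∈ FS x, M < s := by
  have key : ∀ L : ℕ, ∀ᵐ ω ∂μ, 1 ≤ L → ∀ M : ℕ,
      ∃ x : Fin L → ℕ, StrictMono x ∧ FS x ⊆ {n | ε n ω = true} ∧
        ∀ s ∈ FS x, M < s := by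
    intro L
    by_cases hL : 1 ≤ L
    · filter_upwards [aux_perL μ p hp ε hmeas hindep hbern L hL] with ω hω _
      exact hω
    · filter_upwards with ω h; exact absurd h hL
  filter_upwards [ae_all_iff.2 key] with ω hω M _ L hL
  exact hω L hL M
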